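/- Let Ã = [A a] be a real m×(k+1) matrix (a is the last column) such that ÃᵀÃ is invertible, and let B̃ = (ÃᵀÃ)⁻¹. Then AᵀA is invertible and (AᵀA)⁻¹ = B̃' − (1/B̃(k+1,k+1))·u uᵀ, where B̃' is the k×k matrix obtained from B̃ by deleting its last row and last column, u ∈ ℝᵏ is the last column of B̃ with its last entry deleted, and B̃(k+1,k+1) is the last diagonal entry of B̃ (which is nonzero). -/

import Mathlib

open Matrix

noncomputable section

/-- The matrix `A` with the vector `a` appended as a last column. -/
def appendCol {m k : ℕ} (A : Matrix (Fin m) (Fin k) ℝ) (a : Fin m → ℝ) :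
    Matrix (Fin m) (Fin (k + 1)) ℝ :=
  Matrix.of fun i => Fin.snoc (A i) (a i)

/-- Matrix inversion lemma for column removal. -/
theorem stmt1 {m k : ℕ} (A : Matrix (Fin m) (Fin k) ℝ) (a : Fin m → ℝ)
    (Atil : Matrix (Fin m) (Fin (k + 1)) ℝ) (hAtil : Atil = appendCol A a)
    (h : IsUnit (Atilᵀ * Atil))
    (Btil : Matrix (Fin (k + 1)) (Fin (k + 1)) ℝ) (hBtil : Btil = (Atilᵀ * Atil)⁻¹) :
    IsUnit (Aᵀ * A) ∧
      Btil (Fin.last k) (Fin.last k) ≠ 0 ∧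
      (Aᵀ * A)⁻¹ =
        (Matrix.of fun i j : Fin k => Btil i.castSucc j.castSucc) -
          (1 / Btil (Fin.last k) (Fin.last k)) •
            vecMulVec (fun i : Fin k => Btil i.castSucc (Fin.last k))
              (fun i : Fin k => Btil i.castSucc (Fin.last k)) := by
  set M := Atilᵀ * Atil with hM
  have hMd : IsUnit M.det := (Matrix.isUnit_iff_isUnit_det M).mp h
  have hMB : M * Btil = 1 := by rw [hBtil]; exact Matrix.mul_nonsing_inv M hMd
  have hMsymm : Mᵀ = M := by simp [hM, Matrix.transpose_mul]
  have hBsymm : Btilᵀ = Btil := by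
    rw [hBtil, Matrix.transpose_nonsing_inv, hMsymm]
  -- positive definiteness of M
  have hPSD : M.PosSemidef := by
    have := Matrix.posSemidef_conjTranspose_mul_self Atil
    simpa [hM] using this
  have hPD : M.PosDef := by
    refine Matrix.PosDef.of_dotProduct_mulVec_pos hPSD.1 fun x hx => lt_of_le_of_ne (hPSD.dotProduct_mulVec_nonneg x) fun hc => ?_
    have hx0 : Atil *ᵥ x = 0 := by
      have : (Atil *ᵥ x) ⬝ᵥ (Atil *ᵥ x) = 0 := by
        have := hc.symm
        rwa [hM, ← Matrix.mulVec_mulVec, Matrix.dotProduct_mulVec,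
          Matrix.vecMul_transpose, star_trivial] at this
      exact dotProduct_self_eq_zero.mp this
    have hMx : M *ᵥ x = 0 := by
      rw [hM, ← Matrix.mulVec_mulVec, hx0, Matrix.mulVec_zero]
    have : x = 0 := by
      have := congrArg (fun v => Btil *ᵥ v) hMx
      simpa [Matrix.mulVec_mulVec, mul_eq_one_comm.mp hMB] using this
    exact hx this
  have hBPD : Btil.PosDef := by rw [hBtil]; exact hPD.inv
  -- the last diagonal entry of Btil is positive
  have hd : 0 < Btil (Fin.last k) (Fin.last k) := by
    have := hBPD.dotProduct_mulVec_pos (x := Pi.single (Fin.last k) 1) (by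
      intro hc
      have := congrFun hc (Fin.last k)
      simp [Pi.single_apply] at this)
    simpa [Matrix.mulVec_single, dotProduct, Pi.single_apply, Finset.sum_ite_eq',
      mul_comm] using this
  have hdne : Btil (Fin.last k) (Fin.last k) ≠ 0 := ne_of_gt hd
  set d := Btil (Fin.last k) (Fin.last k) with hdd
  set u : Fin k → ℝ := fun i => Btil i.castSucc (Fin.last k) with hu
  -- block entries of M
  have hMcc : ∀ i l : Fin k, M i.castSucc l.castSucc = (Aᵀ * A) i l := by
    intro i l
    simp [hM, Matrix.mul_apply, hAtil, appendCol]
  -- B last column / last row symmetry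
  have hBlr : ∀ j : Fin k, Btil (Fin.last k) j.castSucc = u j := by
    intro j
    have := congrFun (congrFun hBsymm (Fin.last k)) j.castSucc
    simpa [Matrix.transpose_apply, hu] using this.symm
  -- key identities from M * Btil = 1
  have key : ∀ (i : Fin k) (q : Fin (k + 1)),
      (∑ l : Fin k, (Aᵀ * A) i l * Btil l.castSucc q) +
        M i.castSucc (Fin.last k) * Btil (Fin.last k) q
        = if i.castSucc = q then 1 else 0 := by
    intro i q
    have := congrFun (congrFun hMB i.castSucc) q
    rw [Matrix.mul_apply, Fin.sum_univ_castSucc] at this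
    simp only [Matrix.one_apply] at this
    rw [← this]
    congr 1
    exact Finset.sum_congr rfl fun l _ => by rw [hMcc]
  have key1 : ∀ i j : Fin k,
      (∑ l : Fin k, (Aᵀ * A) i l * Btil l.castSucc j.castSucc)
        = (if i = j then (1:ℝ) else 0) - M i.castSucc (Fin.last k) * u j := by
    intro i j
    have := key i j.castSucc
    rw [hBlr] at this
    simp only [Fin.castSucc_inj] at this
    linarith [this]
  have key2 : ∀ i : Fin k,
      (∑ l : Fin k, (Aᵀ * A) i l * u l) = -(M i.castSucc (Fin.last k) * d) := by
    intro i
    have := key i (Fin.last k)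
    rw [if_neg (Fin.castSucc_lt_last i).ne] at this
    simp only [← hu, ← hdd] at this
    linarith [this]
  -- the right inverse
  set X : Matrix (Fin k) (Fin k) ℝ :=
    (Matrix.of fun i j : Fin k => Btil i.castSucc j.castSucc) -
      (1 / d) • vecMulVec u u with hX
  have hPX : (Aᵀ * A) * X = 1 := by
    ext i j
    rw [Matrix.mul_apply]
    have hXe : ∀ l, X l j = Btil l.castSucc j.castSucc - (1 / d) * (u l * u j) := by
      intro l
      simp [hX, Matrix.sub_apply, Matrix.smul_apply, Matrix.vecMulVec_apply]
    calc (∑ l, (Aᵀ * A) i l * X l j)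
        = (∑ l, (Aᵀ * A) i l * Btil l.castSucc j.castSucc)
          - (1 / d) * (∑ l, (Aᵀ * A) i l * u l) * u j := by
          rw [Finset.mul_sum, Finset.sum_mul, ← Finset.sum_sub_distrib]
          exact Finset.sum_congr rfl fun l _ => by rw [hXe]; ring
      _ = (if i = j then (1:ℝ) else 0) := by
          rw [key1, key2]
          field_simp
          split_ifs <;> ring
      _ = (1 : Matrix (Fin k) (Fin k) ℝ) i j := by rw [Matrix.one_apply]
  have hUnit : IsUnit (Aᵀ * A) := by
    refine (Matrix.isUnit_iff_isUnit_det _).mpr ?_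
    have : (Aᵀ * A).det * X.det = 1 := by rw [← Matrix.det_mul, hPX, Matrix.det_one]
    exact IsUnit.of_mul_eq_one _ this
  exact ⟨hUnit, hdne, Matrix.inv_eq_right_inv hPX⟩

end
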